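/- Let X be an n×k real matrix of rank k, Ω an n×n positive definite matrix, and K₁, K₂ k×k positive semidefinite matrices. Then K₁ X^T (Ω + X K₁ X^T)^{-1} = K₂ X^T (I_n + X K₂ X^T)^{-1} holds (i.e., the two Bayes linear estimators coincide for all y ∈ ℝⁿ) if and only if Ω X K₂ = X K₁. -/

import Mathlib

open Matrix

theorem stmt_5 {n k : ℕ} (hnk : k < n)
    (X : Matrix (Fin n) (Fin k) ℝ) (hX : X.rank = k)
    (Ω : Matrix (Fin n) (Fin n) ℝ) (hΩ : Ω.PosDef)
    (K₁ K₂ : Matrix (Fin k) (Fin k) ℝ) (hK₁ : K₁.PosSemidef) (hK₂ : K₂.PosSemidef) :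
    K₁ * Xᵀ * (Ω + X * K₁ * Xᵀ)⁻¹ = K₂ * Xᵀ * (1 + X * K₂ * Xᵀ)⁻¹ ↔
      Ω * X * K₂ = X * K₁ := by
  have hXK₁ : (X * K₁ * Xᵀ).PosSemidef := by
    simpa using hK₁.mul_mul_conjTranspose_same X
  have hXK₂ : (X * K₂ * Xᵀ).PosSemidef := by
    simpa using hK₂.mul_mul_conjTranspose_same X
  set A := Ω + X * K₁ * Xᵀ with hAdef
  set B := 1 + X * K₂ * Xᵀ with hBdef
  have hA : A.PosDef := hΩ.add_posSemidef hXK₁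
  have hB : B.PosDef := Matrix.PosDef.one.add_posSemidef hXK₂
  have hAi : IsUnit A.det := hA.det_pos.ne'.isUnit
  have hBi : IsUnit B.det := hB.det_pos.ne'.isUnit
  -- symmetry facts
  have hΩs : Ωᵀ = Ω := hΩ.isHermitian
  have hK₁s : K₁ᵀ = K₁ := hK₁.isHermitian
  have hK₂s : K₂ᵀ = K₂ := hK₂.isHermitian
  -- C := 1 + K₂ XᵀX is invertible
  set C : Matrix (Fin k) (Fin k) ℝ := 1 + K₂ * (Xᵀ * X) with hCdef
  have hCi : IsUnit C.det := by
    obtain ⟨R, hRs, hRR⟩ : ∃ R : Matrix (Fin k) (Fin k) ℝ, R.PosSemidef ∧ R * R = K₂ :=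
      open scoped MatrixOrder in
      ⟨CFC.sqrt K₂, (CFC.sqrt_nonneg K₂).posSemidef, CFC.sqrt_mul_sqrt_self K₂ hK₂.nonneg⟩
    have hRt : Rᵀ = R := hRs.isHermitian
    have hdet : C.det = (1 + R * (Xᵀ * X) * R).det := by
      rw [hCdef, ← hRR, Matrix.mul_assoc, Matrix.det_one_add_mul_comm, Matrix.mul_assoc,
        Matrix.mul_assoc]
    have hpos : (1 + R * (Xᵀ * X) * R).PosDef := by
      have h1 : ((X * R)ᵀ * (X * R)).PosSemidef := by
        simpa using Matrix.posSemidef_conjTranspose_mul_self (X * R)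
      have h2 : (X * R)ᵀ * (X * R) = R * (Xᵀ * X) * R := by
        rw [Matrix.transpose_mul, hRt]
        simp [Matrix.mul_assoc]
      rw [h2] at h1
      exact Matrix.PosDef.one.add_posSemidef h1
    rw [hdet]
    exact hpos.det_pos.ne'.isUnit
  -- push-through identity: C * (K₂ * Xᵀ) = (K₂ * Xᵀ) * B
  have key : C * (K₂ * Xᵀ) = K₂ * Xᵀ * B := by
    rw [hCdef, hBdef]
    simp [Matrix.add_mul, Matrix.mul_add, Matrix.mul_assoc]
  have hpush : K₂ * Xᵀ * B⁻¹ = C⁻¹ * (K₂ * Xᵀ) := by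
    calc K₂ * Xᵀ * B⁻¹ = C⁻¹ * (C * (K₂ * Xᵀ)) * B⁻¹ := by
          rw [Matrix.nonsing_inv_mul_cancel_left _ _ hCi]
      _ = C⁻¹ * (K₂ * Xᵀ * B) * B⁻¹ := by rw [key]
      _ = C⁻¹ * (K₂ * Xᵀ) := by
          rw [Matrix.mul_assoc, Matrix.mul_nonsing_inv_cancel_right _ _ hBi]
  have hexp : C * (K₁ * Xᵀ) = K₁ * Xᵀ + K₂ * (Xᵀ * X) * (K₁ * Xᵀ) := by
    rw [hCdef]
    simp [Matrix.add_mul, Matrix.mul_add, Matrix.mul_assoc]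
  have hexp2 : K₂ * Xᵀ * A = K₂ * Xᵀ * Ω + K₂ * (Xᵀ * X) * (K₁ * Xᵀ) := by
    rw [hAdef]
    simp [Matrix.add_mul, Matrix.mul_add, Matrix.mul_assoc]
  constructor
  · intro h
    rw [hpush] at h
    have h2 : K₁ * Xᵀ = C⁻¹ * (K₂ * Xᵀ) * A := by
      calc K₁ * Xᵀ = K₁ * Xᵀ * A⁻¹ * A := by
            rw [Matrix.nonsing_inv_mul_cancel_right _ _ hAi]
        _ = C⁻¹ * (K₂ * Xᵀ) * A := by rw [h]
    have h3 : C * (K₁ * Xᵀ) = K₂ * Xᵀ * A := by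
      rw [h2, ← Matrix.mul_assoc, Matrix.mul_nonsing_inv_cancel_left _ _ hCi]
    rw [hexp, hexp2] at h3
    have h4 : K₁ * Xᵀ = K₂ * Xᵀ * Ω := add_right_cancel h3
    have := congrArg Matrix.transpose h4
    simpa [Matrix.transpose_mul, hΩs, hK₁s, hK₂s, Matrix.mul_assoc] using this.symm
  · intro h
    have h1 : K₁ * Xᵀ = K₂ * Xᵀ * Ω := by
      have := congrArg Matrix.transpose h
      simpa [Matrix.transpose_mul, hΩs, hK₁s, hK₂s, Matrix.mul_assoc] using this.symm
    have h3 : C * (K₁ * Xᵀ) = K₂ * Xᵀ * A := by rw [hexp, hexp2, h1]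
    rw [hpush]
    calc K₁ * Xᵀ * A⁻¹ = C⁻¹ * (C * (K₁ * Xᵀ)) * A⁻¹ := by
          rw [Matrix.nonsing_inv_mul_cancel_left _ _ hCi]
      _ = C⁻¹ * (K₂ * Xᵀ * A) * A⁻¹ := by rw [h3]
      _ = C⁻¹ * (K₂ * Xᵀ) := by
          rw [Matrix.mul_assoc, Matrix.mul_nonsing_inv_cancel_right _ _ hAi]
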